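/- The connected double diamond graph cannot occur as an induced subgraph of the enhanced conflict graph of any multicast switch traffic pattern. -/

import Mathlib

/-- A subflow of a multicast traffic pattern: an input, a fanout set of outputs,
and a particular output in the fanout. -/
structure Subflow (I O : Type*) where
  inp : I
  fanout : Set O
  out : O
  mem : out ∈ fanout

/-- The enhanced conflict graph: two distinct subflows are adjacent iff they have
the same output, or the same input but different fanout sets. -/
def enhancedConflictGraph (I O : Type*) : SimpleGraph (Subflow I O) where
  Adj a b := a ≠ b ∧ (a.out = b.out ∨ (a.inp = b.inp ∧ a.fanout ≠ b.fanout))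
  symm := by
    constructor
    rintro a b ⟨hne, h | ⟨h1, h2⟩⟩
    · exact ⟨hne.symm, Or.inl h.symm⟩
    · exact ⟨hne.symm, Or.inr ⟨h1.symm, h2.symm⟩⟩
  loopless := by constructor; rintro a ⟨hne, _⟩; exact hne rfl

/-- The connected double diamond: two diamonds (K₄ minus an edge) `{A,B,C,G}`
(missing edge `BG`) and `{C,D,E,F}` (missing edge `DF`) sharing the central
vertex `C`; vertices `A,…,G` are `0,…,6`. -/
def connectedDoubleDiamond : SimpleGraph (Fin 7) :=
  SimpleGraph.fromRel (fun a b =>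
    (a, b) ∈ [((0 : Fin 7), (1 : Fin 7)), (0, 2), (0, 6), (1, 2), (2, 6),
      (2, 3), (2, 4), (2, 5), (3, 4), (4, 5)])


instance : DecidableRel connectedDoubleDiamond.Adj := fun a b =>
  decidable_of_iff _ (SimpleGraph.fromRel_adj _ a b).symm

/-- The connected double diamond does not occur as an induced subgraph of the
enhanced conflict graph of any multicast switch traffic pattern. -/
theorem stmt4 {I O : Type*} :
    ¬ ∃ f : Fin 7 → Subflow I O, Function.Injective f ∧
      ∀ a b : Fin 7,
        (enhancedConflictGraph I O).Adj (f a) (f b) ↔ connectedDoubleDiamond.Adj a b := by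
  rintro ⟨f, hinj, h⟩
  have adj : ∀ a b : Fin 7, connectedDoubleDiamond.Adj a b →
      (f a).out = (f b).out ∨ ((f a).inp = (f b).inp ∧ (f a).fanout ≠ (f b).fanout) :=
    fun a b hab => ((h a b).2 hab).2
  have nadj : ∀ a b : Fin 7, a ≠ b → ¬ connectedDoubleDiamond.Adj a b →
      (f a).out ≠ (f b).out ∧ ((f a).inp = (f b).inp → (f a).fanout = (f b).fanout) := by
    intro a b hab hn
    have h1 : ¬ (f a ≠ f b ∧ ((f a).out = (f b).out ∨
        ((f a).inp = (f b).inp ∧ (f a).fanout ≠ (f b).fanout))) :=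
      fun ha => hn ((h a b).1 ha)
    have hne : f a ≠ f b := fun e => hab (hinj e)
    push_neg at h1
    have h2 := h1 hne
    exact h2
  have eD := adj 4 3 (by decide)
  have eF := adj 4 5 (by decide)
  have aB := adj 0 1 (by decide)
  have aG := adj 0 6 (by decide)
  have nBD := nadj 1 3 (by decide) (by decide)
  have nBF := nadj 1 5 (by decide) (by decide)
  have nBG := nadj 1 6 (by decide) (by decide)
  have nDF := nadj 3 5 (by decide) (by decide)
  have nDG := nadj 3 6 (by decide) (by decide)
  have nFG := nadj 5 6 (by decide) (by decide)
  have nGD := nadj 6 3 (by decide) (by decide)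
  have nGF := nadj 6 5 (by decide) (by decide)
  have nEB := nadj 4 1 (by decide) (by decide)
  have nEG := nadj 4 6 (by decide) (by decide)
  have nAD := nadj 0 3 (by decide) (by decide)
  have nAF := nadj 0 5 (by decide) (by decide)
  -- Argument via E: if D and F both share C's input, and some w ∈ {B,G} also does.
  have keyE : ∀ w : Fin 7, (f 2).inp = (f w).inp →
      (f 2).inp = (f 3).inp → (f 2).inp = (f 5).inp →
      ((f w).inp = (f 3).inp → (f w).fanout = (f 3).fanout) →
      ((f w).inp = (f 5).inp → (f w).fanout = (f 5).fanout) →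
      ((f 4).inp = (f w).inp → (f 4).fanout = (f w).fanout) → False := by
    intro w hw h3 h5 hw3 hw5 h4w
    rcases eD with oD | ⟨iD, fD⟩
    · rcases eF with oF | ⟨iF, fF⟩
      · exact nDF.1 (oD.symm.trans oF)
      · have ha : (f 4).fanout = (f w).fanout := h4w (iF.trans (h5.symm.trans hw))
        have hb : (f w).fanout = (f 5).fanout := hw5 (hw.symm.trans h5)
        exact fF (ha.trans hb)
    · have ha : (f 4).fanout = (f w).fanout := h4w (iD.trans (h3.symm.trans hw))
      have hb : (f w).fanout = (f 3).fanout := hw3 (hw.symm.trans h3)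
      exact fD (ha.trans hb)
  -- Argument via A: if B and G both share C's input, and some v ∈ {D,F} also does.
  have keyA : ∀ v : Fin 7, (f 2).inp = (f 1).inp → (f 2).inp = (f 6).inp →
      (f 2).inp = (f v).inp →
      ((f 1).inp = (f v).inp → (f 1).fanout = (f v).fanout) →
      ((f 6).inp = (f v).inp → (f 6).fanout = (f v).fanout) →
      ((f 0).inp = (f v).inp → (f 0).fanout = (f v).fanout) → False := by
    intro v i1 i6 iv h1v h6v h0v
    rcases aB with oB | ⟨iAB, fAB⟩
    · rcases aG with oG | ⟨iAG, fAG⟩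
      · exact nBG.1 (oB.symm.trans oG)
      · have ha : (f 0).fanout = (f v).fanout := h0v (iAG.trans (i6.symm.trans iv))
        have hb : (f 6).fanout = (f v).fanout := h6v (i6.symm.trans iv)
        exact fAG (ha.trans hb.symm)
    · have ha : (f 0).fanout = (f v).fanout := h0v (iAB.trans (i1.symm.trans iv))
      have hb : (f 1).fanout = (f v).fanout := h1v (i1.symm.trans iv)
      exact fAB (ha.trans hb.symm)
  rcases adj 2 1 (by decide) with o1 | ⟨i1, _⟩ <;>
    rcases adj 2 3 (by decide) with o3 | ⟨i3, _⟩ <;>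
      rcases adj 2 5 (by decide) with o5 | ⟨i5, _⟩ <;>
        rcases adj 2 6 (by decide) with o6 | ⟨i6, _⟩
  · exact nBD.1 (o1.symm.trans o3)
  · exact nBD.1 (o1.symm.trans o3)
  · exact nBD.1 (o1.symm.trans o3)
  · exact nBD.1 (o1.symm.trans o3)
  · exact nBF.1 (o1.symm.trans o5)
  · exact nBF.1 (o1.symm.trans o5)
  · exact nBG.1 (o1.symm.trans o6)
  · exact keyE 6 i6 i3 i5 nGD.2 nGF.2 nEG.2
  · exact nDF.1 (o3.symm.trans o5)
  · exact nDF.1 (o3.symm.trans o5)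
  · exact nDG.1 (o3.symm.trans o6)
  · exact keyA 5 i1 i6 i5 nBF.2 nGF.2 nAF.2
  · exact nFG.1 (o5.symm.trans o6)
  · exact keyA 3 i1 i6 i3 nBD.2 nGD.2 nAD.2
  · exact keyE 1 i1 i3 i5 nBD.2 nBF.2 nEB.2
  · exact keyE 1 i1 i3 i5 nBD.2 nBF.2 nEB.2
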